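/- Let X be a mixture set, n ≥ 2 a finite integer, and ≽ a binary relation on X^n. Then ≽ satisfies axioms F1, F2′, F3, F4, F5, F6, F7 if and only if there exists a pair (u, δ) providing an exponentially discounted expected utility representation for ≽ on X^n. -/

import Mathlib

/-- A mixture set: a set `X` with an operation `mix x l y` (written `xλy` in the paper),
satisfying the Herstein–Milnor axioms for `l, m ∈ [0,1]`. -/
structure MixtureSpace (X : Type*) where
  mix : X → ℝ → X → X
  mix_one : ∀ x y : X, mix x 1 y = x
  mix_comm : ∀ (x y : X), ∀ l ∈ Set.Icc (0:ℝ) 1, mix x l y = mix y (1 - l) x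
  mix_assoc : ∀ (x y : X), ∀ l ∈ Set.Icc (0:ℝ) 1, ∀ m ∈ Set.Icc (0:ℝ) 1,
    mix (mix x m y) l y = mix x (l * m) y

/-- `u : X → ℝ` is mixture linear. -/
def MixtureSpace.linear {X : Type*} (M : MixtureSpace X) (u : X → ℝ) : Prop :=
  ∀ (x y : X), ∀ l ∈ Set.Icc (0:ℝ) 1, u (M.mix x l y) = l * u x + (1 - l) * u y

/-- Strict (asymmetric) part of a relation. -/
def strictP {α : Type*} (R : α → α → Prop) (x y : α) : Prop := R x y ∧ ¬ R y x

/-- Componentwise mixture of finite streams. -/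
def mixStream {X : Type*} (M : MixtureSpace X) {n : ℕ} (x : Fin n → X) (l : ℝ)
    (y : Fin n → X) : Fin n → X := fun t => M.mix (x t) l (y t)

/-- Componentwise mixture of infinite streams. -/
def mixSeq {X : Type*} (M : MixtureSpace X) (x : ℕ → X) (l : ℝ) (y : ℕ → X) :
    ℕ → X := fun t => M.mix (x t) l (y t)

/-! ### Finite-horizon axioms -/

/-- F1: weak order (complete and transitive). -/
def AxF1 {X : Type*} {n : ℕ} (R : (Fin n → X) → (Fin n → X) → Prop) : Prop :=
  (∀ x y, R x y ∨ R y x) ∧ Transitive R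

/-- F2: non-triviality (a ≻ b for some a, b in the induced relation). -/
def AxF2 {X : Type*} {n : ℕ} (R : (Fin n → X) → (Fin n → X) → Prop) : Prop :=
  ∃ a b : X, strictP R (fun _ => a) (fun _ => b)

/-- F3: mixture independence. -/
def AxF3 {X : Type*} (M : MixtureSpace X) {n : ℕ}
    (R : (Fin n → X) → (Fin n → X) → Prop) : Prop :=
  ∀ x y z : Fin n → X, ∀ l ∈ Set.Ioo (0:ℝ) 1,
    (R x y ↔ R (mixStream M x l z) (mixStream M y l z))

/-- F4: mixture continuity. -/
def AxF4 {X : Type*} (M : MixtureSpace X) {n : ℕ}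
    (R : (Fin n → X) → (Fin n → X) → Prop) : Prop :=
  ∀ x y z : Fin n → X,
    IsClosed {l : ℝ | l ∈ Set.Icc (0:ℝ) 1 ∧ R (mixStream M x l z) y} ∧
    IsClosed {l : ℝ | l ∈ Set.Icc (0:ℝ) 1 ∧ R y (mixStream M x l z)}

/-- F5: monotonicity. -/
def AxF5 {X : Type*} {n : ℕ} (R : (Fin n → X) → (Fin n → X) → Prop) : Prop :=
  ∀ x y : Fin n → X, (∀ t, R (fun _ => x t) (fun _ => y t)) → R x y

/-- `(u, w)` provides an AA representation for `R` on `X^n`. -/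
def AARep {X : Type*} (M : MixtureSpace X) {n : ℕ}
    (R : (Fin n → X) → (Fin n → X) → Prop) (u : X → ℝ) (w : Fin n → ℝ) : Prop :=
  M.linear u ∧ (∃ a b : X, u a ≠ u b) ∧ (∀ t, 0 ≤ w t) ∧ (∃ t, 0 < w t) ∧
  ∀ x y : Fin n → X, (R x y ↔ (∑ t, w t * u (x t)) ≥ ∑ t, w t * u (y t))

/-! ### Infinite-horizon notions -/

/-- Ultimately constant stream (equals `x0` from some period on). -/
def UltConst {X : Type*} (x0 : X) (x : ℕ → X) : Prop := ∃ T, ∀ t, T ≤ t → x t = x0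

/-- Member of `X**`: ultimately constant or constant. -/
def InXSS {X : Type*} (x0 : X) (x : ℕ → X) : Prop :=
  UltConst x0 x ∨ ∃ a, ∀ t, x t = a

/-- `[a]_k`: the stream with `a` in period `k` and `x0` elsewhere. -/
def bracket {X : Type*} (x0 : X) (a : X) (k : ℕ) : ℕ → X :=
  fun t => if t = k then a else x0

/-- `(x₁, …, x_{k−1}, a, x_{k+1}, …, x_T, x0, x0, …)`. -/
def truncMod {X : Type*} (x0 : X) (x : ℕ → X) (k : ℕ) (a : X) (T : ℕ) : ℕ → X :=
  fun t => if t = k then a else if t ≤ T then x t else x0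

/-- I1: weak order. -/
def AxI1 {X : Type*} (R : (ℕ → X) → (ℕ → X) → Prop) : Prop :=
  (∀ x y, R x y ∨ R y x) ∧ Transitive R

/-- I2: non-triviality `a ≻ x0 ≻ b` in the induced relation. -/
def AxI2 {X : Type*} (x0 : X) (R : (ℕ → X) → (ℕ → X) → Prop) : Prop :=
  ∃ a b : X, strictP R (fun _ => a) (fun _ => x0) ∧ strictP R (fun _ => x0) (fun _ => b)

/-- I3: mixture independence on `X**`. -/
def AxI3 {X : Type*} (M : MixtureSpace X) (x0 : X)
    (R : (ℕ → X) → (ℕ → X) → Prop) : Prop :=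
  ∀ x y z : ℕ → X, InXSS x0 x → InXSS x0 y → InXSS x0 z →
    ∀ l ∈ Set.Ioo (0:ℝ) 1, (R x y ↔ R (mixSeq M x l z) (mixSeq M y l z))

/-- I4: mixture continuity. -/
def AxI4 {X : Type*} (M : MixtureSpace X) (x0 : X)
    (R : (ℕ → X) → (ℕ → X) → Prop) : Prop :=
  ∀ x z : ℕ → X, InXSS x0 x → InXSS x0 z → ∀ y : ℕ → X,
    IsClosed {l : ℝ | l ∈ Set.Icc (0:ℝ) 1 ∧ R (mixSeq M x l z) y} ∧
    IsClosed {l : ℝ | l ∈ Set.Icc (0:ℝ) 1 ∧ R y (mixSeq M x l z)}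

/-- I5: monotonicity. -/
def AxI5 {X : Type*} (R : (ℕ → X) → (ℕ → X) → Prop) : Prop :=
  ∀ x y : ℕ → X, (∀ t, R (fun _ => x t) (fun _ => y t)) → R x y

/-- I6: convergence. -/
def AxI6 {X : Type*} (x0 : X) (R : (ℕ → X) → (ℕ → X) → Prop) : Prop :=
  ∀ (x : ℕ → X) (a : X) (k : ℕ),
    (strictP R (bracket x0 a k) (bracket x0 (x k) k) →
      ∃ Tp, k ≤ Tp ∧ ∀ T, Tp ≤ T → R (truncMod x0 x k a T) x) ∧
    (strictP R (bracket x0 (x k) k) (bracket x0 a k) →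
      ∃ Tm, k ≤ Tm ∧ ∀ T, Tm ≤ T → R x (truncMod x0 x k a T))

/-- `(u, w)` provides an AA representation for `R` on `X^∞` (with its
discounted-utility series converging for every stream). -/
def AARepInf {X : Type*} (M : MixtureSpace X)
    (R : (ℕ → X) → (ℕ → X) → Prop) (u : X → ℝ) (w : ℕ → ℝ) : Prop :=
  M.linear u ∧ (∃ a b : X, u a ≠ u b) ∧ (∀ t, 0 ≤ w t) ∧ (∃ t, 0 < w t) ∧
  ∃ U : (ℕ → X) → ℝ,
    (∀ x : ℕ → X, Filter.Tendsto (fun N => ∑ t ∈ Finset.range N, w t * u (x t))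
      Filter.atTop (nhds (U x))) ∧
    ∀ x y : ℕ → X, (R x y ↔ U x ≥ U y)

/-! ### Exponential discounting -/

/-- F2′: essentiality of period 1. -/
def AxF2' {X : Type*} {n : ℕ} (R : (Fin n → X) → (Fin n → X) → Prop)
    (h0 : 0 < n) : Prop :=
  ∃ (a b : X) (x : Fin n → X),
    strictP R (Function.update x ⟨0, h0⟩ a) (Function.update x ⟨0, h0⟩ b)

/-- F6: impatience. -/
def AxF6 {X : Type*} {n : ℕ} (R : (Fin n → X) → (Fin n → X) → Prop)
    (h0 : 0 < n) (h1 : 1 < n) : Prop :=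
  ∀ a b : X, strictP R (fun _ => a) (fun _ => b) →
    ∀ x : Fin n → X,
      strictP R (Function.update (Function.update x ⟨0, h0⟩ a) ⟨1, h1⟩ b)
               (Function.update (Function.update x ⟨0, h0⟩ b) ⟨1, h1⟩ a)

/-- `(x₂, …, xₙ, a)`. -/
def shiftApp {X : Type*} {n : ℕ} (x : Fin n → X) (a : X) : Fin n → X :=
  fun t => if h : (t : ℕ) + 1 < n then x ⟨(t : ℕ) + 1, h⟩ else a

/-- F7: stationarity. -/
def AxF7 {X : Type*} {n : ℕ} (R : (Fin n → X) → (Fin n → X) → Prop)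
    (h0 : 0 < n) : Prop :=
  ∀ (a : X) (x y : Fin n → X),
    (R (Function.update x ⟨0, h0⟩ a) (Function.update y ⟨0, h0⟩ a) ↔
     R (shiftApp x a) (shiftApp y a))

/-- `(u, δ)` provides an exponentially discounted expected utility representation. -/
def ExpRep {X : Type*} (M : MixtureSpace X) {n : ℕ}
    (R : (Fin n → X) → (Fin n → X) → Prop) (u : X → ℝ) (δ : ℝ) : Prop :=
  M.linear u ∧ (∃ a b : X, u a ≠ u b) ∧ δ ∈ Set.Ioo (0:ℝ) 1 ∧
  ∀ x y : Fin n → X,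
    (R x y ↔ (∑ t : Fin n, δ ^ (t : ℕ) * u (x t)) ≥ ∑ t : Fin n, δ ^ (t : ℕ) * u (y t))

/-- I2′: essentiality of period 1 (infinite horizon). -/
def AxI2' {X : Type*} (x0 : X) (R : (ℕ → X) → (ℕ → X) → Prop) : Prop :=
  ∃ a b : X, strictP R (bracket x0 a 0) (fun _ => x0) ∧
    strictP R (fun _ => x0) (bracket x0 b 0)

/-- `(a, x₁, x₂, …)`. -/
def consSeq {X : Type*} (a : X) (x : ℕ → X) : ℕ → X :=
  fun t => if t = 0 then a else x (t - 1)

/-- I7: stationarity (infinite horizon). -/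
def AxI7 {X : Type*} (R : (ℕ → X) → (ℕ → X) → Prop) : Prop :=
  ∀ (a : X) (x y : ℕ → X), (R (consSeq a x) (consSeq a y) ↔ R x y)

/-- `(u, δ)` provides an exponentially discounted expected utility representation
on `X^∞`, with converging series. -/
def ExpRepInf {X : Type*} (M : MixtureSpace X)
    (R : (ℕ → X) → (ℕ → X) → Prop) (u : X → ℝ) (δ : ℝ) : Prop :=
  M.linear u ∧ (∃ a b : X, u a ≠ u b) ∧ δ ∈ Set.Ioo (0:ℝ) 1 ∧
  ∃ U : (ℕ → X) → ℝ,
    (∀ x : ℕ → X, Filter.Tendsto (fun N => ∑ t ∈ Finset.range N, δ ^ t * u (x t))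
      Filter.atTop (nhds (U x))) ∧
    ∀ x y : ℕ → X, (R x y ↔ U x ≥ U y)

/-! ### Semi-hyperbolic discounting -/

/-- The SH(T) discount function at (1-based) period `t`:
`D 1 = 1`, `D t = β₁⋯β_{t−1} δ^{t−1}` for `2 ≤ t ≤ T`,
`D t = β₁⋯β_{T−1} δ^{t−1}` for `t > T`. -/
noncomputable def SHD (T : ℕ) (β : ℕ → ℝ) (δ : ℝ) (t : ℕ) : ℝ :=
  (∏ i ∈ Finset.Icc 1 (min t T - 1), β i) * δ ^ (t - 1)

/-- Parameter restrictions: `0 < β₁ ≤ … ≤ β_{T−1} ≤ 1` and `δ ∈ (0,1)`. -/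
def SHParams (T : ℕ) (β : ℕ → ℝ) (δ : ℝ) : Prop :=
  (∀ i : ℕ, 1 ≤ i → i ≤ T - 1 → 0 < β i ∧ β i ≤ 1) ∧
  (∀ i : ℕ, 1 ≤ i → i + 1 ≤ T - 1 → β i ≤ β (i + 1)) ∧
  δ ∈ Set.Ioo (0:ℝ) 1

/-- `(u, β, δ)` provides an SH(T) discounted expected utility representation on `X^n`. -/
def SHRep {X : Type*} (M : MixtureSpace X) {n : ℕ}
    (R : (Fin n → X) → (Fin n → X) → Prop)
    (T : ℕ) (β : ℕ → ℝ) (δ : ℝ) (u : X → ℝ) : Prop :=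
  M.linear u ∧ (∃ a b : X, u a ≠ u b) ∧ SHParams T β δ ∧
  ∀ x y : Fin n → X,
    (R x y ↔ (∑ s : Fin n, SHD T β δ ((s : ℕ) + 1) * u (x s)) ≥
      ∑ s : Fin n, SHD T β δ ((s : ℕ) + 1) * u (y s))

/-- F2″: essentiality of (1-based) periods `1, …, T`. -/
def AxF2'' {X : Type*} {n : ℕ} (R : (Fin n → X) → (Fin n → X) → Prop)
    (T : ℕ) (hTn : T ≤ n) : Prop :=
  ∃ (a b : X) (x : Fin n → X), ∀ i : ℕ, ∀ hi : i < T,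
    strictP R (Function.update x ⟨i, lt_of_lt_of_le hi hTn⟩ a)
             (Function.update x ⟨i, lt_of_lt_of_le hi hTn⟩ b)

/-- F6′: impatience between (1-based) periods `T` and `T+1`. -/
def AxF6' {X : Type*} {n : ℕ} (R : (Fin n → X) → (Fin n → X) → Prop)
    (T : ℕ) (h1 : T - 1 < n) (h2 : T < n) : Prop :=
  ∀ a b : X, strictP R (fun _ => a) (fun _ => b) →
    ∀ x : Fin n → X,
      strictP R (Function.update (Function.update x ⟨T-1, h1⟩ a) ⟨T, h2⟩ b)
               (Function.update (Function.update x ⟨T-1, h1⟩ b) ⟨T, h2⟩ a)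

/-- Delete (0-based) coordinate `i`, shift the rest left, and append `a` at the end. -/
def delIns {X : Type*} {n : ℕ} (x : Fin n → X) (i : ℕ) (a : X) : Fin n → X :=
  fun s => if (s : ℕ) < i then x s
    else if h : (s : ℕ) + 1 < n then x ⟨(s : ℕ) + 1, h⟩ else a

/-- F7′: stationarity from (1-based) period `T`. -/
def AxF7' {X : Type*} {n : ℕ} (R : (Fin n → X) → (Fin n → X) → Prop)
    (T : ℕ) (h1 : T - 1 < n) : Prop :=
  ∀ (a : X) (x y : Fin n → X), (∀ s : Fin n, (s : ℕ) < T - 1 → x s = y s) →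
    (R (Function.update x ⟨T-1, h1⟩ a) (Function.update y ⟨T-1, h1⟩ a) ↔
     R (delIns x (T-1) a) (delIns y (T-1) a))

/-- `(x₁, …, x_{t−2}, a, b, x_{t+2}, …, xₙ, x_{t−1})` where `i` is the 0-based
index of period `t` (so `i = t − 1`). -/
def ebShiftFin {X : Type*} {n : ℕ} (x : Fin n → X) (i : ℕ) (hi : i - 1 < n)
    (a b : X) : Fin n → X :=
  fun s => if (s : ℕ) < i - 1 then x s
    else if (s : ℕ) = i - 1 then a
    else if (s : ℕ) = i then b
    else if h : (s : ℕ) + 1 < n then x ⟨(s : ℕ) + 1, h⟩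
    else x ⟨i - 1, hi⟩

/-- F8: early bias. -/
def AxF8 {X : Type*} {n : ℕ} (R : (Fin n → X) → (Fin n → X) → Prop)
    (T : ℕ) (hTn : T < n) : Prop :=
  ∀ a b c d : X,
    strictP R (fun _ => a) (fun _ => c) → strictP R (fun _ => d) (fun _ => b) →
    ∀ x : Fin n → X, ∀ i : ℕ, ∀ hi1 : 1 ≤ i, ∀ hi2 : i ≤ T - 1,
      (R (Function.update (Function.update x ⟨i, by omega⟩ a) ⟨i+1, by omega⟩ b)
         (Function.update (Function.update x ⟨i, by omega⟩ c) ⟨i+1, by omega⟩ d) ∧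
       R (Function.update (Function.update x ⟨i, by omega⟩ c) ⟨i+1, by omega⟩ d)
         (Function.update (Function.update x ⟨i, by omega⟩ a) ⟨i+1, by omega⟩ b)) →
      R (ebShiftFin x i (by omega) a b) (ebShiftFin x i (by omega) c d)

/-- `(u, β, δ)` provides an SH(T) discounted expected utility representation on `X^∞`. -/
def SHRepInf {X : Type*} (M : MixtureSpace X)
    (R : (ℕ → X) → (ℕ → X) → Prop)
    (T : ℕ) (β : ℕ → ℝ) (δ : ℝ) (u : X → ℝ) : Prop :=
  M.linear u ∧ (∃ a b : X, u a ≠ u b) ∧ SHParams T β δ ∧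
  ∃ U : (ℕ → X) → ℝ,
    (∀ x : ℕ → X, Filter.Tendsto
      (fun N => ∑ t ∈ Finset.range N, SHD T β δ (t + 1) * u (x t))
      Filter.atTop (nhds (U x))) ∧
    ∀ x y : ℕ → X, (R x y ↔ U x ≥ U y)

/-- I2″: essentiality of (1-based) periods `1, …, T`. -/
def AxI2'' {X : Type*} (x0 : X) (R : (ℕ → X) → (ℕ → X) → Prop) (T : ℕ) : Prop :=
  ∃ a b : X, ∀ t : ℕ, t < T →
    strictP R (bracket x0 a t) (fun _ => x0) ∧ strictP R (fun _ => x0) (bracket x0 b t)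

/-- Delete (0-based) coordinate `i` of an infinite stream. -/
def delSeq {X : Type*} (x : ℕ → X) (i : ℕ) : ℕ → X :=
  fun t => if t < i then x t else x (t + 1)

/-- I7′: stationarity from (1-based) period `T`. -/
def AxI7' {X : Type*} (R : (ℕ → X) → (ℕ → X) → Prop) (T : ℕ) : Prop :=
  ∀ (a : X) (x y : ℕ → X), (∀ t, t < T - 1 → x t = y t) →
    (R (Function.update x (T-1) a) (Function.update y (T-1) a) ↔
     R (delSeq x (T-1)) (delSeq y (T-1)))

/-- `(x₁, …, x_{t−2}, a, b, x_{t+2}, …)` where `i = t − 1` (0-based index of period `t`). -/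
def ebShiftSeq {X : Type*} (x : ℕ → X) (i : ℕ) (a b : X) : ℕ → X :=
  fun s => if s < i - 1 then x s
    else if s = i - 1 then a
    else if s = i then b
    else x (s + 1)

/-- I8: early bias (infinite horizon). -/
def AxI8 {X : Type*} (R : (ℕ → X) → (ℕ → X) → Prop) (T : ℕ) : Prop :=
  ∀ a b c d : X,
    strictP R (fun _ => a) (fun _ => c) → strictP R (fun _ => d) (fun _ => b) →
    ∀ x : ℕ → X, ∀ i : ℕ, 1 ≤ i → i ≤ T - 1 →
      (R (Function.update (Function.update x i a) (i+1) b)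
         (Function.update (Function.update x i c) (i+1) d) ∧
       R (Function.update (Function.update x i c) (i+1) d)
         (Function.update (Function.update x i a) (i+1) b)) →
      R (ebShiftSeq x i a b) (ebShiftSeq x i c d)

section MixAlgebra

variable {Y : Type*} (N : MixtureSpace Y)

lemma mix_zero (x y : Y) : N.mix x 0 y = y := by
  rw [N.mix_comm x y 0 ⟨le_refl 0, zero_le_one⟩]
  norm_num [N.mix_one]

lemma mix_self (x : Y) {l : ℝ} (hl : l ∈ Set.Icc (0:ℝ) 1) : N.mix x l x = x := by
  have h := N.mix_assoc x x l hl 0 ⟨le_refl 0, zero_le_one⟩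
  rw [mix_zero] at h
  rw [h, mul_zero, mix_zero]

lemma mem_Icc_of_Icc {l m : ℝ} (hl : l ∈ Set.Icc (0:ℝ) 1) (hm : m ∈ Set.Icc (0:ℝ) 1) :
    1 - (1 - l) * (1 - m) ∈ Set.Icc (0:ℝ) 1 := by
  obtain ⟨h1, h2⟩ := hl; obtain ⟨h3, h4⟩ := hm
  constructor <;> nlinarith

lemma one_sub_mem_Icc {l : ℝ} (hl : l ∈ Set.Icc (0:ℝ) 1) : 1 - l ∈ Set.Icc (0:ℝ) 1 := by
  obtain ⟨h1, h2⟩ := hl; constructor <;> linarith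

/-- `a μ (a κ y) = a (1-(1-μ)(1-κ)) y`. -/
lemma mix_absorb (a y : Y) {μ κ : ℝ} (hμ : μ ∈ Set.Icc (0:ℝ) 1) (hκ : κ ∈ Set.Icc (0:ℝ) 1) :
    N.mix a μ (N.mix a κ y) = N.mix a (1 - (1 - μ) * (1 - κ)) y := by
  rw [N.mix_comm a y κ hκ]
  rw [N.mix_comm a (N.mix y (1-κ) a) μ hμ]
  rw [N.mix_assoc y a (1-μ) (one_sub_mem_Icc hμ) (1-κ) (one_sub_mem_Icc hκ)]
  rw [N.mix_comm y a ((1-μ)*(1-κ)) (by obtain ⟨h1,h2⟩ := hμ; obtain ⟨h3,h4⟩ := hκ; constructor <;> nlinarith)]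

/-- Key interval lemma: `(xλy) μ (xνy) = x (μλ+(1−μ)ν) y`. -/
lemma mix_mix (x y : Y) {l m μ : ℝ} (hl : l ∈ Set.Icc (0:ℝ) 1) (hm : m ∈ Set.Icc (0:ℝ) 1)
    (hμ : μ ∈ Set.Icc (0:ℝ) 1) :
    N.mix (N.mix x l y) μ (N.mix x m y) = N.mix x (μ * l + (1 - μ) * m) y := by
  -- first the case m ≤ l
  have key : ∀ l m μ : ℝ, l ∈ Set.Icc (0:ℝ) 1 → m ∈ Set.Icc (0:ℝ) 1 → μ ∈ Set.Icc (0:ℝ) 1 →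
      m ≤ l → N.mix (N.mix x l y) μ (N.mix x m y) = N.mix x (μ * l + (1 - μ) * m) y := by
    intro l m μ hl hm hμ hml
    rcases eq_or_lt_of_le hl.1 with h0 | h0
    · -- l = 0, hence m = 0
      have hm0 : m = 0 := le_antisymm (h0 ▸ hml) hm.1
      have hl0 : l = 0 := h0.symm
      subst hm0; subst hl0
      rw [mix_zero, mix_self N y hμ]
      norm_num [mix_zero]
    · have hml' : m / l ∈ Set.Icc (0:ℝ) 1 := by
        constructor
        · exact div_nonneg hm.1 (le_of_lt h0)
        · rw [div_le_one h0]; exact hml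
      have hrw : N.mix x m y = N.mix (N.mix x l y) (m/l) y := by
        rw [N.mix_assoc x y (m/l) hml' l hl, div_mul_cancel₀ m (ne_of_gt h0)]
      rw [hrw, mix_absorb N _ y hμ hml']
      rw [N.mix_assoc x y _ (mem_Icc_of_Icc hμ hml') l hl]
      congr 1
      field_simp
      ring
  rcases le_or_gt m l with h | h
  · exact key l m μ hl hm hμ h
  · rw [N.mix_comm (N.mix x l y) (N.mix x m y) μ hμ]
    rw [key m l (1-μ) hm hl (one_sub_mem_Icc hμ) (le_of_lt h)]
    congr 1; ring

end MixAlgebra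

section RelLemmas

variable {Y : Type*} (N : MixtureSpace Y) {R : Y → Y → Prop}

lemma rel_refl (hcomp : ∀ x y, R x y ∨ R y x) (x : Y) : R x x := (hcomp x x).elim id id

lemma betw (hcomp : ∀ x y, R x y ∨ R y x)
    (hind : ∀ x y z : Y, ∀ l ∈ Set.Ioo (0:ℝ) 1, (R x y ↔ R (N.mix x l z) (N.mix y l z)))
    {x y : Y} (hxy : R x y) {l : ℝ} (hl : l ∈ Set.Icc (0:ℝ) 1) :
    R x (N.mix x l y) ∧ R (N.mix x l y) y := by
  rcases eq_or_lt_of_le hl.2 with h1 | h1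
  · subst h1; rw [N.mix_one]; exact ⟨rel_refl hcomp x, hxy⟩
  rcases eq_or_lt_of_le hl.1 with h0 | h0
  · rw [← h0, mix_zero]; exact ⟨hxy, rel_refl hcomp y⟩
  have hIoo : l ∈ Set.Ioo (0:ℝ) 1 := ⟨h0, h1⟩
  constructor
  · have h := (hind x y x (1-l) ⟨by linarith, by linarith⟩).mp hxy
    rw [mix_self N x (by constructor <;> linarith)] at h
    rw [N.mix_comm y x (1-l) (by constructor <;> linarith)] at h
    have e : (1 : ℝ) - (1 - l) = l := by ring
    rwa [e] at h
  · have h := (hind x y y l hIoo).mp hxy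
    rwa [mix_self N y hl] at h

lemma strict_ind
    (hind : ∀ x y z : Y, ∀ l ∈ Set.Ioo (0:ℝ) 1, (R x y ↔ R (N.mix x l z) (N.mix y l z)))
    (x y z : Y) {l : ℝ} (hl : l ∈ Set.Ioo (0:ℝ) 1) :
    strictP R x y ↔ strictP R (N.mix x l z) (N.mix y l z) := by
  unfold strictP
  rw [← hind x y z l hl, ← hind y x z l hl]

lemma strict_mono' (hcomp : ∀ x y, R x y ∨ R y x)
    (hind : ∀ x y z : Y, ∀ l ∈ Set.Ioo (0:ℝ) 1, (R x y ↔ R (N.mix x l z) (N.mix y l z)))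
    {x y : Y} (hxy : strictP R x y) {l m : ℝ} (hm0 : 0 ≤ m) (hml : m < l) (hl1 : l ≤ 1) :
    strictP R (N.mix x l y) (N.mix x m y) := by
  have hl0 : 0 < l := lt_of_le_of_lt hm0 hml
  -- strictP (x l y) y
  have hA : strictP R (N.mix x l y) y := by
    rcases eq_or_lt_of_le hl1 with h1 | h1
    · subst h1; rwa [N.mix_one]
    · have h := (strict_ind N hind x y y ⟨hl0, h1⟩).mp hxy
      rwa [mix_self N y ⟨le_of_lt hl0, le_of_lt h1⟩] at h
  have hrw : N.mix x m y = N.mix (N.mix x l y) (m/l) y := by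
    rw [N.mix_assoc x y (m/l) ⟨div_nonneg hm0 (le_of_lt hl0), by rw [div_le_one hl0]; linarith⟩ l
      ⟨le_of_lt hl0, hl1⟩, div_mul_cancel₀ m (ne_of_gt hl0)]
  rw [hrw]
  rcases eq_or_lt_of_le (div_nonneg hm0 (le_of_lt hl0)) with h0 | h0
  · rw [← h0, mix_zero]; exact hA
  · have hκ : m / l ∈ Set.Ioo (0:ℝ) 1 := ⟨h0, by rw [div_lt_one hl0]; exact hml⟩
    have h := (strict_ind N hind (N.mix x l y) y (N.mix x l y) (l := 1 - m/l) ⟨by linarith [hκ.2], by linarith [hκ.1]⟩).mp hA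
    rw [mix_self N (N.mix x l y) ⟨by linarith [hκ.2], by linarith [hκ.1]⟩] at h
    rw [N.mix_comm y (N.mix x l y) (1 - m/l) ⟨by linarith [hκ.2], by linarith [hκ.1]⟩] at h
    have e : (1 : ℝ) - (1 - m/l) = m/l := by ring
    rwa [e] at h

lemma indiff_sub1 (hcomp : ∀ x y, R x y ∨ R y x)
    (hind : ∀ x y z : Y, ∀ l ∈ Set.Ioo (0:ℝ) 1, (R x y ↔ R (N.mix x l z) (N.mix y l z)))
    {z z' : Y} (w : Y) (hI : R z z' ∧ R z' z) {l : ℝ} (hl : l ∈ Set.Icc (0:ℝ) 1) :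
    R (N.mix z l w) (N.mix z' l w) ∧ R (N.mix z' l w) (N.mix z l w) := by
  rcases eq_or_lt_of_le hl.2 with h1 | h1
  · subst h1; rw [N.mix_one, N.mix_one]; exact hI
  rcases eq_or_lt_of_le hl.1 with h0 | h0
  · rw [← h0, mix_zero, mix_zero]; exact ⟨rel_refl hcomp w, rel_refl hcomp w⟩
  exact ⟨(hind z z' w l ⟨h0, h1⟩).mp hI.1, (hind z' z w l ⟨h0, h1⟩).mp hI.2⟩

lemma indiff_sub2 (hcomp : ∀ x y, R x y ∨ R y x)
    (hind : ∀ x y z : Y, ∀ l ∈ Set.Ioo (0:ℝ) 1, (R x y ↔ R (N.mix x l z) (N.mix y l z)))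
    (z : Y) {w w' : Y} (hI : R w w' ∧ R w' w) {l : ℝ} (hl : l ∈ Set.Icc (0:ℝ) 1) :
    R (N.mix z l w) (N.mix z l w') ∧ R (N.mix z l w') (N.mix z l w) := by
  rw [N.mix_comm z w l hl, N.mix_comm z w' l hl]
  exact indiff_sub1 N hcomp hind z hI (one_sub_mem_Icc hl)

lemma solvable (hcomp : ∀ x y, R x y ∨ R y x)
    (hcont : ∀ x y z : Y, IsClosed {l : ℝ | l ∈ Set.Icc (0:ℝ) 1 ∧ R (N.mix x l z) y} ∧
      IsClosed {l : ℝ | l ∈ Set.Icc (0:ℝ) 1 ∧ R y (N.mix x l z)})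
    {x y z : Y} (hxz : R x z) (hzy : R z y) :
    ∃ l, l ∈ Set.Icc (0:ℝ) 1 ∧ (R z (N.mix x l y) ∧ R (N.mix x l y) z) := by
  obtain ⟨hT, hT'⟩ := hcont x z y
  have hpre := (isPreconnected_closed_iff.mp isPreconnected_Icc)
    {l : ℝ | l ∈ Set.Icc (0:ℝ) 1 ∧ R (N.mix x l y) z}
    {l : ℝ | l ∈ Set.Icc (0:ℝ) 1 ∧ R z (N.mix x l y)} hT hT'
    (fun l hl => by
      rcases hcomp (N.mix x l y) z with h | h
      · exact Or.inl ⟨hl, h⟩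
      · exact Or.inr ⟨hl, h⟩)
    ⟨1, ⟨le_of_lt one_pos, le_refl 1⟩, ⟨le_of_lt one_pos, le_refl 1⟩, by rw [N.mix_one]; exact hxz⟩
    ⟨0, ⟨le_refl 0, zero_le_one⟩, ⟨le_refl 0, zero_le_one⟩, by rw [mix_zero]; exact hzy⟩
  obtain ⟨l, _, ⟨_, h1⟩, ⟨hmem, h2⟩⟩ := hpre
  exact ⟨l, hmem, h2, h1⟩

lemma lam_unique (hcomp : ∀ x y, R x y ∨ R y x) (htrans : Transitive R)
    (hind : ∀ x y z : Y, ∀ l ∈ Set.Ioo (0:ℝ) 1, (R x y ↔ R (N.mix x l z) (N.mix y l z)))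
    {x y z : Y} (hxy : strictP R x y) {l m : ℝ} (hl : l ∈ Set.Icc (0:ℝ) 1)
    (hm : m ∈ Set.Icc (0:ℝ) 1)
    (hIl : R z (N.mix x l y) ∧ R (N.mix x l y) z)
    (hIm : R z (N.mix x m y) ∧ R (N.mix x m y) z) : l = m := by
  rcases lt_trichotomy l m with h | h | h
  · exact absurd (htrans hIl.2 hIm.1) (strict_mono' N hcomp hind hxy hl.1 h hm.2).2
  · exact h
  · exact absurd (htrans hIm.2 hIl.1) (strict_mono' N hcomp hind hxy hm.1 h hl.2).2

end RelLemmas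

section GenHM

variable {Y : Type*} (N : MixtureSpace Y) {R : Y → Y → Prop}

lemma convex_mem {l lz lw : ℝ} (hl : l ∈ Set.Icc (0:ℝ) 1) (hlz : lz ∈ Set.Icc (0:ℝ) 1)
    (hlw : lw ∈ Set.Icc (0:ℝ) 1) : l * lz + (1 - l) * lw ∈ Set.Icc (0:ℝ) 1 := by
  obtain ⟨a1,a2⟩ := hl; obtain ⟨b1,b2⟩ := hlz; obtain ⟨c1,c2⟩ := hlw
  constructor <;> nlinarith

lemma interval_rep (hcomp : ∀ x y, R x y ∨ R y x) (htrans : Transitive R)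
    (hind : ∀ x y z : Y, ∀ l ∈ Set.Ioo (0:ℝ) 1, (R x y ↔ R (N.mix x l z) (N.mix y l z)))
    {a b z w : Y} {lz lw : ℝ} (hab : strictP R a b)
    (hlz : lz ∈ Set.Icc (0:ℝ) 1) (hlw : lw ∈ Set.Icc (0:ℝ) 1)
    (hz : R z (N.mix a lz b) ∧ R (N.mix a lz b) z)
    (hw : R w (N.mix a lw b) ∧ R (N.mix a lw b) w) :
    R z w ↔ lz ≥ lw := by
  constructor
  · intro h
    by_contra hc
    push_neg at hc
    exact (strict_mono' N hcomp hind hab hlz.1 hc hlw.2).2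
      (htrans (htrans hz.2 h) hw.1)
  · intro h
    rcases eq_or_lt_of_le h with heq | hlt
    · exact htrans hz.1 (heq ▸ hw.2)
    · exact htrans (htrans hz.1 (strict_mono' N hcomp hind hab hlw.1 hlt hlz.2).1) hw.2

lemma interval_mix (hcomp : ∀ x y, R x y ∨ R y x) (htrans : Transitive R)
    (hind : ∀ x y z : Y, ∀ l ∈ Set.Ioo (0:ℝ) 1, (R x y ↔ R (N.mix x l z) (N.mix y l z)))
    {a b z w : Y} {lz lw l : ℝ}
    (hlz : lz ∈ Set.Icc (0:ℝ) 1) (hlw : lw ∈ Set.Icc (0:ℝ) 1) (hl : l ∈ Set.Icc (0:ℝ) 1)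
    (hz : R z (N.mix a lz b) ∧ R (N.mix a lz b) z)
    (hw : R w (N.mix a lw b) ∧ R (N.mix a lw b) w) :
    R (N.mix z l w) (N.mix a (l * lz + (1 - l) * lw) b) ∧
      R (N.mix a (l * lz + (1 - l) * lw) b) (N.mix z l w) := by
  have step1 := indiff_sub1 N hcomp hind w hz hl
  have step2 := indiff_sub2 N hcomp hind (N.mix a lz b) hw hl
  rw [mix_mix N a b hlz hlw hl] at step2
  exact ⟨htrans step1.1 step2.1, htrans step2.2 step1.2⟩

theorem genHM (hcomp : ∀ x y, R x y ∨ R y x) (htrans : Transitive R)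
    (hind : ∀ x y z : Y, ∀ l ∈ Set.Ioo (0:ℝ) 1, (R x y ↔ R (N.mix x l z) (N.mix y l z)))
    (hcont : ∀ x y z : Y, IsClosed {l : ℝ | l ∈ Set.Icc (0:ℝ) 1 ∧ R (N.mix x l z) y} ∧
      IsClosed {l : ℝ | l ∈ Set.Icc (0:ℝ) 1 ∧ R y (N.mix x l z)})
    {e1 e0 : Y} (hP : strictP R e1 e0) :
    ∃ U : Y → ℝ, N.linear U ∧ U e1 = 1 ∧ U e0 = 0 ∧ ∀ x y, (R x y ↔ U x ≥ U y) := by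
  classical
  have hlam0 : ∀ a b z : Y, ∃ l : ℝ, (strictP R a b ∧ R a z ∧ R z b) →
      (l ∈ Set.Icc (0:ℝ) 1 ∧ (R z (N.mix a l b) ∧ R (N.mix a l b) z)) := by
    intro a b z
    by_cases h : strictP R a b ∧ R a z ∧ R z b
    · obtain ⟨l, h1, h2⟩ := solvable N hcomp hcont h.2.1 h.2.2
      exact ⟨l, fun _ => ⟨h1, h2⟩⟩
    · exact ⟨0, fun hc => absurd hc h⟩
  choose lam hlam using hlam0
  have lam_mem : ∀ {a b z}, strictP R a b → R a z → R z b → lam a b z ∈ Set.Icc (0:ℝ) 1 :=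
    fun h1 h2 h3 => (hlam _ _ _ ⟨h1, h2, h3⟩).1
  have lam_I : ∀ {a b z}, strictP R a b → R a z → R z b →
      (R z (N.mix a (lam a b z) b) ∧ R (N.mix a (lam a b z) b) z) :=
    fun h1 h2 h3 => (hlam _ _ _ ⟨h1, h2, h3⟩).2
  have Rtop : ∀ {c z w : Y} {l : ℝ}, l ∈ Set.Icc (0:ℝ) 1 → R c z → R c w →
      R c (N.mix z l w) := by
    intro c z w l hl h1 h2
    rcases hcomp z w with h | h
    · exact htrans h1 (betw N hcomp hind h hl).1
    · rw [N.mix_comm z w l hl]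
      exact htrans h2 (betw N hcomp hind h (one_sub_mem_Icc hl)).1
  have Rbot : ∀ {c z w : Y} {l : ℝ}, l ∈ Set.Icc (0:ℝ) 1 → R z c → R w c →
      R (N.mix z l w) c := by
    intro c z w l hl h1 h2
    rcases hcomp z w with h | h
    · exact htrans (betw N hcomp hind h hl).2 h2
    · rw [N.mix_comm z w l hl]
      exact htrans (betw N hcomp hind h (one_sub_mem_Icc hl)).2 h1
  have hDpos : ∀ a b, strictP R a b → R a e1 → R e0 b → lam a b e0 < lam a b e1 := by
    intro a b hab h1 h0
    have he1b : R e1 b := htrans hP.1 h0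
    have hae0 : R a e0 := htrans h1 hP.1
    have hiff := interval_rep N hcomp htrans hind hab (lam_mem hab hae0 h0)
      (lam_mem hab h1 he1b) (lam_I hab hae0 h0) (lam_I hab h1 he1b)
    by_contra hc
    push_neg at hc
    exact hP.2 (hiff.mpr hc)
  obtain ⟨U, hU⟩ : ∃ U : Y → ℝ, ∀ z, U z =
      (if R e1 z ∧ R z e0 then lam e1 e0 z
       else if R z e1 ∧ ¬ R e1 z then (lam z e0 e1)⁻¹
       else -(lam e1 z e0) / (1 - lam e1 z e0)) := ⟨_, fun z => rfl⟩
  have master : ∀ a b, strictP R a b → R a e1 → R e0 b → ∀ z, R a z → R z b →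
      U z = (lam a b z - lam a b e0) / (lam a b e1 - lam a b e0) := by
    intro a b hab h1 h0 z haz hzb
    have he1b : R e1 b := htrans hP.1 h0
    have hae0 : R a e0 := htrans h1 hP.1
    have hL1 := lam_I hab h1 he1b
    have hL0 := lam_I hab hae0 h0
    have hLz := lam_I hab haz hzb
    have hL1m := lam_mem hab h1 he1b
    have hL0m := lam_mem hab hae0 h0
    have hLzm := lam_mem hab haz hzb
    have hD : lam a b e0 < lam a b e1 := hDpos a b hab h1 h0
    have hDne : lam a b e1 - lam a b e0 ≠ 0 := ne_of_gt (by linarith)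
    rw [hU z]
    by_cases hA : R e1 z ∧ R z e0
    · rw [if_pos hA]
      have htm := lam_mem hP hA.1 hA.2
      have htI := lam_I hP hA.1 hA.2
      have hmix := interval_mix N hcomp htrans hind hL1m hL0m htm hL1 hL0
      have hzI : R z (N.mix a (lam e1 e0 z * lam a b e1 + (1 - lam e1 e0 z) * lam a b e0) b) ∧
          R (N.mix a (lam e1 e0 z * lam a b e1 + (1 - lam e1 e0 z) * lam a b e0) b) z :=
        ⟨htrans htI.1 hmix.1, htrans hmix.2 htI.2⟩
      have hEq : lam a b z = lam e1 e0 z * lam a b e1 + (1 - lam e1 e0 z) * lam a b e0 :=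
        lam_unique N hcomp htrans hind hab hLzm (convex_mem htm hL1m hL0m) hLz hzI
      rw [hEq, eq_div_iff hDne]
      ring
    · by_cases hB : R z e1 ∧ ¬ R e1 z
      · rw [if_neg hA, if_pos hB]
        have hPz0 : strictP R z e0 := ⟨htrans hB.1 hP.1, fun h => hB.2 (htrans hP.1 h)⟩
        have hmm := lam_mem hPz0 hB.1 hP.1
        have hmI := lam_I hPz0 hB.1 hP.1
        have hm0 : lam z e0 e1 ≠ 0 := by
          intro h
          rw [h, mix_zero] at hmI
          exact hP.2 hmI.2
        have hmixI := interval_mix N hcomp htrans hind hLzm hL0m hmm hLz hL0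
        have hE : lam a b e1 = lam z e0 e1 * lam a b z + (1 - lam z e0 e1) * lam a b e0 :=
          lam_unique N hcomp htrans hind hab hL1m (convex_mem hmm hLzm hL0m) hL1
            ⟨htrans hmI.1 hmixI.1, htrans hmixI.2 hmI.2⟩
        rw [inv_eq_one_div, div_eq_div_iff hm0 hDne]
        linear_combination hE
      · have hz0 : ¬ R z e0 := by
          intro h
          have h1z : ¬ R e1 z := fun h' => hA ⟨h', h⟩
          exact hB ⟨(hcomp z e1).resolve_right h1z, h1z⟩
        have hC : strictP R e0 z := ⟨(hcomp z e0).resolve_left hz0, hz0⟩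
        have hPe1z : strictP R e1 z :=
          ⟨htrans hP.1 hC.1, fun h => hz0 (htrans h hP.1)⟩
        rw [if_neg hA, if_neg hB]
        have hmm := lam_mem hPe1z hP.1 hC.1
        have hmI := lam_I hPe1z hP.1 hC.1
        have hm1 : lam e1 z e0 ≠ 1 := by
          intro h
          rw [h, N.mix_one] at hmI
          exact hP.2 hmI.1
        have hm1' : 1 - lam e1 z e0 ≠ 0 := fun h => hm1 (by linarith [sub_eq_zero.mp h])
        have hmixI := interval_mix N hcomp htrans hind hL1m hLzm hmm hL1 hLz
        have hE : lam a b e0 = lam e1 z e0 * lam a b e1 + (1 - lam e1 z e0) * lam a b z :=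
          lam_unique N hcomp htrans hind hab hL0m (convex_mem hmm hL1m hLzm) hL0
            ⟨htrans hmI.1 hmixI.1, htrans hmixI.2 hmI.2⟩
        rw [div_eq_div_iff hm1' hDne]
        linear_combination hE
  have envelope : ∀ z w : Y, ∃ a b, strictP R a b ∧ R a e1 ∧ R e0 b ∧
      R a z ∧ R z b ∧ R a w ∧ R w b := by
    intro z w
    obtain ⟨c, hcz, hcw⟩ : ∃ c, R c z ∧ R c w := by
      rcases hcomp z w with h | h
      · exact ⟨z, rel_refl hcomp z, h⟩
      · exact ⟨w, h, rel_refl hcomp w⟩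
    obtain ⟨a, hac, hae1⟩ : ∃ a, R a c ∧ R a e1 := by
      rcases hcomp c e1 with h | h
      · exact ⟨c, rel_refl hcomp c, h⟩
      · exact ⟨e1, h, rel_refl hcomp e1⟩
    obtain ⟨d, hzd, hwd⟩ : ∃ d, R z d ∧ R w d := by
      rcases hcomp z w with h | h
      · exact ⟨w, h, rel_refl hcomp w⟩
      · exact ⟨z, rel_refl hcomp z, h⟩
    obtain ⟨b, hdb, he0b⟩ : ∃ b, R d b ∧ R e0 b := by
      rcases hcomp d e0 with h | h
      · exact ⟨e0, h, rel_refl hcomp e0⟩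
      · exact ⟨d, rel_refl hcomp d, h⟩
    have hzb : R z b := htrans hzd hdb
    have hwb : R w b := htrans hwd hdb
    have haz : R a z := htrans hac hcz
    have haw : R a w := htrans hac hcw
    refine ⟨a, b, ⟨htrans (htrans hae1 hP.1) he0b, fun h => hP.2 (htrans (htrans he0b h) hae1)⟩,
      hae1, he0b, haz, hzb, haw, hwb⟩
  refine ⟨U, ?_, ?_, ?_, ?_⟩
  · -- linearity
    intro z w l hl
    obtain ⟨a, b, hab, h1, h0, haz, hzb, haw, hwb⟩ := envelope z w
    have hmt : R a (N.mix z l w) := Rtop hl haz haw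
    have hmb : R (N.mix z l w) b := Rbot hl hzb hwb
    rw [master a b hab h1 h0 z haz hzb, master a b hab h1 h0 w haw hwb,
      master a b hab h1 h0 (N.mix z l w) hmt hmb]
    have hmix := interval_mix N hcomp htrans hind (lam_mem hab haz hzb)
      (lam_mem hab haw hwb) hl (lam_I hab haz hzb) (lam_I hab haw hwb)
    have hEq : lam a b (N.mix z l w) = l * lam a b z + (1 - l) * lam a b w :=
      lam_unique N hcomp htrans hind hab (lam_mem hab hmt hmb)
        (convex_mem hl (lam_mem hab haz hzb) (lam_mem hab haw hwb))
        (lam_I hab hmt hmb) hmix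
    have hD : lam a b e0 < lam a b e1 := hDpos a b hab h1 h0
    have hDne : lam a b e1 - lam a b e0 ≠ 0 := ne_of_gt (by linarith)
    rw [hEq]
    field_simp
    ring
  · -- U e1 = 1
    rw [master e1 e0 hP (rel_refl hcomp e1) (rel_refl hcomp e0) e1 (rel_refl hcomp e1) hP.1]
    have hD := hDpos e1 e0 hP (rel_refl hcomp e1) (rel_refl hcomp e0)
    exact div_self (ne_of_gt (by linarith))
  · -- U e0 = 0
    rw [master e1 e0 hP (rel_refl hcomp e1) (rel_refl hcomp e0) e0 hP.1 (rel_refl hcomp e0)]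
    rw [sub_self, zero_div]
  · -- representation
    intro z w
    obtain ⟨a, b, hab, h1, h0, haz, hzb, haw, hwb⟩ := envelope z w
    rw [master a b hab h1 h0 z haz hzb, master a b hab h1 h0 w haw hwb]
    have hiff := interval_rep N hcomp htrans hind hab (lam_mem hab haz hzb)
      (lam_mem hab haw hwb) (lam_I hab haz hzb) (lam_I hab haw hwb)
    have hD : lam a b e0 < lam a b e1 := hDpos a b hab h1 h0
    rw [ge_iff_le, div_le_div_iff₀ (by linarith) (by linarith), hiff]
    constructor
    · intro h; nlinarith
    · intro h; nlinarith
end GenHM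

section Tools

variable {X : Type*}

/-- Componentwise product mixture space on streams. -/
def prodMixture (M : MixtureSpace X) (n : ℕ) : MixtureSpace (Fin n → X) where
  mix := mixStream M
  mix_one x y := funext fun t => M.mix_one _ _
  mix_comm x y l hl := funext fun t => M.mix_comm _ _ l hl
  mix_assoc x y l hl m hm := funext fun t => M.mix_assoc _ _ l hl m hm

/-- Alignment ("cone") lemma: a mixture-linear functional monotone w.r.t. a
non-constant mixture-linear `u` is a nonnegative affine transform of `u`. -/
lemma cone_lemma (M : MixtureSpace X) {u φ : X → ℝ} (hu : M.linear u) (hφ : M.linear φ)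
    (hmono : ∀ a b, u a ≥ u b → φ a ≥ φ b) {p q : X} (hpq : u q < u p) :
    ∃ w : ℝ, 0 ≤ w ∧ ∀ a b, φ a - φ b = w * (u a - u b) := by
  have hne : u p - u q ≠ 0 := ne_of_gt (by linarith)
  have hEq : ∀ c d : X, u c = u d → φ c = φ d := fun c d h =>
    le_antisymm (hmono d c h.le) (hmono c d h.ge)
  refine ⟨(φ p - φ q) / (u p - u q),
    div_nonneg (by linarith [hmono p q (le_of_lt hpq)]) (by linarith), ?_⟩
  have key : ∀ c : X, φ c - φ q = (φ p - φ q) / (u p - u q) * (u c - u q) := by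
    intro c
    rw [div_mul_eq_mul_div, eq_div_iff hne]
    rcases le_or_gt (u c) (u p) with hcp | hcp
    · rcases le_or_gt (u q) (u c) with hqc | hqc
      · -- q ≤ c ≤ p
        set l : ℝ := (u c - u q) / (u p - u q) with hldef
        have hlD : l * (u p - u q) = u c - u q := div_mul_cancel₀ _ hne
        have hl : l ∈ Set.Icc (0:ℝ) 1 :=
          ⟨div_nonneg (by linarith) (by linarith), by rw [div_le_one (by linarith)]; linarith⟩
        have hφd : l * φ p + (1 - l) * φ q = φ c := by
          rw [← hφ p q l hl]
          exact hEq _ _ (by rw [hu p q l hl]; linarith [hlD])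
        linear_combination (-(u p - u q)) * hφd + (φ p - φ q) * hlD
      · -- c < q
        have hpc : (0:ℝ) < u p - u c := by linarith
        set l : ℝ := (u q - u c) / (u p - u c) with hldef
        have hlD : l * (u p - u c) = u q - u c := div_mul_cancel₀ _ (ne_of_gt hpc)
        have hl : l ∈ Set.Icc (0:ℝ) 1 :=
          ⟨div_nonneg (by linarith) (by linarith), by rw [div_le_one hpc]; linarith⟩
        have hφd : l * φ p + (1 - l) * φ c = φ q := by
          rw [← hφ p c l hl]
          exact hEq _ _ (by rw [hu p c l hl]; linarith [hlD])
        linear_combination (u p - u c) * hφd + (φ c - φ p) * hlD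
    · -- p < c
      have hcq : (0:ℝ) < u c - u q := by linarith
      set l : ℝ := (u p - u q) / (u c - u q) with hldef
      have hlD : l * (u c - u q) = u p - u q := div_mul_cancel₀ _ (ne_of_gt hcq)
      have hl : l ∈ Set.Icc (0:ℝ) 1 :=
        ⟨div_nonneg (by linarith) (by linarith), by rw [div_le_one hcq]; linarith⟩
      have hφd : l * φ c + (1 - l) * φ q = φ p := by
        rw [← hφ c q l hl]
        exact hEq _ _ (by rw [hu c q l hl]; linarith [hlD])
      linear_combination (u c - u q) * hφd - (φ c - φ q) * hlD
  intro a b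
  have ha := key a
  have hb := key b
  have h3 : φ a - φ b = (φ a - φ q) - (φ b - φ q) := by ring
  rw [h3, ha, hb]
  ring

/-- Summation with one coordinate updated. -/
lemma sum_update {n : ℕ} (w : Fin n → ℝ) (g : X → ℝ) (x : Fin n → X) (i : Fin n) (c : X) :
    ∑ t, w t * g (Function.update x i c t) =
      (∑ t, w t * g (x t)) + w i * (g c - g (x i)) := by
  classical
  have h : (fun t => w t * g (Function.update x i c t)) =
      Function.update (fun t => w t * g (x t)) i (w i * g c) := by
    funext t
    by_cases h : t = i
    · subst h; simp
    · simp [Function.update_of_ne h]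
  rw [h, Finset.sum_update_of_mem (Finset.mem_univ i)]
  rw [Finset.sdiff_singleton_eq_erase, Finset.sum_erase_eq_sub (Finset.mem_univ i)]
  ring

/-- Ratio comparison lemma. -/
lemma ratio_le {A B C D : ℝ} (hA : 0 < A) (hB : 0 < B) (hC : 0 ≤ C) (hD : 0 ≤ D)
    (h : ∀ α β : ℝ, α ∈ Set.Icc (0:ℝ) 1 → β ∈ Set.Icc (0:ℝ) 1 →
      (A * α ≥ C * β → B * α ≥ D * β)) : D * A ≤ C * B := by
  by_contra hc
  push_neg at hc
  rcases le_or_gt D B with hr | hr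
  · -- use α := C/A, β := 1
    have hαm : C / A ∈ Set.Icc (0:ℝ) 1 := by
      refine ⟨div_nonneg hC (le_of_lt hA), ?_⟩
      rw [div_le_one hA]
      nlinarith
    have h1 := h (C/A) 1 hαm ⟨zero_le_one, le_refl 1⟩
      (by rw [mul_one, mul_div_cancel₀ C (ne_of_gt hA)])
    rw [mul_one] at h1
    have h2 : D * A ≤ B * (C / A) * A := mul_le_mul_of_nonneg_right h1 (le_of_lt hA)
    have h3 : B * (C / A) * A = B * C := by
      rw [mul_assoc, div_mul_cancel₀ C (ne_of_gt hA)]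
    nlinarith
  · -- B < D
    have hDpos : 0 < D := lt_trans hB hr
    have hβm : B / D ∈ Set.Icc (0:ℝ) 1 :=
      ⟨div_nonneg (le_of_lt hB) (le_of_lt hDpos), by rw [div_le_one hDpos]; linarith⟩
    have hCpos : 0 < C := by
      rcases eq_or_lt_of_le hC with h0 | h0
      · exfalso
        have h1 := h 0 1 ⟨le_refl 0, zero_le_one⟩ ⟨zero_le_one, le_refl 1⟩ (by simp [← h0])
        rw [mul_zero, mul_one] at h1
        linarith
      · exact h0
    have hαm : C * B / (A * D) ∈ Set.Icc (0:ℝ) 1 := by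
      refine ⟨div_nonneg (by positivity) (by positivity), ?_⟩
      rw [div_le_one (by positivity)]
      nlinarith
    have e1 : A * (C * B / (A * D)) = C * B / D := by
      field_simp
    have e2 : C * (B / D) = C * B / D := by ring
    have hLHS : A * (C * B / (A * D)) ≥ C * (B / D) := by rw [e1, e2]
    have h1 := h _ _ hαm hβm hLHS
    have e3 : D * (B / D) = B := by field_simp
    have e4 : B * (C * B / (A * D)) = C * B * B / (A * D) := by ring
    rw [e3, e4, ge_iff_le, le_div_iff₀ (by positivity : (0:ℝ) < A * D)] at h1
    nlinarith

lemma ratio_eq {A B C D : ℝ} (hA : 0 < A) (hB : 0 < B) (hC : 0 ≤ C) (hD : 0 ≤ D)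
    (h : ∀ α β : ℝ, α ∈ Set.Icc (0:ℝ) 1 → β ∈ Set.Icc (0:ℝ) 1 →
      (A * α ≥ C * β ↔ B * α ≥ D * β)) : C * B = D * A :=
  le_antisymm
    (ratio_le hB hA hD hC (fun α β hα hβ hh => (h α β hα hβ).mpr hh))
    (ratio_le hA hB hC hD (fun α β hα hβ hh => (h α β hα hβ).mp hh))

end Tools

section Peel

variable {X : Type*}

lemma peel_update {m : ℕ} (v : Fin (m+2) → ℝ) (g : X → ℝ) (x : Fin (m+2) → X) (a : X) :
    ∑ t, v t * g (Function.update x 0 a t) =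
      v 0 * g a + ∑ t : Fin (m+1), v t.succ * g (x t.succ) := by
  rw [Fin.sum_univ_succ, Function.update_self]
  have h1 : ∀ t : Fin (m+1), Function.update x 0 a t.succ = x t.succ :=
    fun t => Function.update_of_ne (Fin.succ_ne_zero t) _ _
  simp only [h1]

lemma peel_shiftApp {m : ℕ} (v : Fin (m+2) → ℝ) (g : X → ℝ) (x : Fin (m+2) → X) (a : X) :
    ∑ t, v t * g (shiftApp x a t) =
      (∑ t : Fin (m+1), v t.castSucc * g (x t.succ)) + v (Fin.last (m+1)) * g a := by
  have h1 : ∀ t : Fin (m+1), shiftApp x a t.castSucc = x t.succ := by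
    intro t
    have ht : ((t.castSucc : Fin (m+2)) : ℕ) + 1 < m + 2 := by
      simp only [Fin.coe_castSucc]
      omega
    simp only [shiftApp, dif_pos ht]
    exact congrArg x (Fin.ext (by simp))
  have h2 : shiftApp x a (Fin.last (m+1)) = a := by
    have ht : ¬ (((Fin.last (m+1) : Fin (m+2)) : ℕ) + 1 < m + 2) := by
      simp [Fin.val_last]
    simp only [shiftApp, dif_neg ht]
  rw [Fin.sum_univ_castSucc]
  simp only [h1, h2]

end Peel

section FwdHelpers

lemma add_left_ge_iff {c A B : ℝ} : (c + A ≥ c + B) ↔ A ≥ B := by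
  constructor <;> intro <;> linarith

lemma add_right_ge_iff {c A B : ℝ} : (A + c ≥ B + c) ↔ A ≥ B := by
  constructor <;> intro <;> linarith

lemma ge_shift_scale {S S' P Q D : ℝ} (hD : 0 < D) :
    (S + P * D ≥ S' + Q * D) ↔ (S + P * D ≥ S' + Q * D) := Iff.rfl

lemma shift_scale_iff {S P Q D : ℝ} (hD : 0 < D) :
    (S + P * D ≥ S + Q * D) ↔ P ≥ Q := by
  constructor <;> intro h <;> nlinarith

end FwdHelpers

/-- Exponential discounting, finite horizon:
`≽` satisfies F1, F2′, F3–F7 iff it has an exponentially discounted expected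
utility representation. -/
theorem exp_discounting_finite {X : Type*} (M : MixtureSpace X) (n : ℕ) (hn : 2 ≤ n)
    (R : (Fin n → X) → (Fin n → X) → Prop) :
    (AxF1 R ∧ AxF2' R (by omega) ∧ AxF3 M R ∧ AxF4 M R ∧ AxF5 R ∧
      AxF6 R (by omega) (by omega) ∧ AxF7 R (by omega)) ↔
    ∃ (u : X → ℝ) (δ : ℝ), ExpRep M R u δ := by
  constructor
  · rintro ⟨⟨hcomp, htrans⟩, hF2, hF3, hF4, hF5, hF6, hF7⟩
    obtain ⟨m, rfl⟩ : ∃ m, n = m + 2 := ⟨n - 2, by omega⟩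
    have h00 : (⟨0, by omega⟩ : Fin (m+2)) = (0 : Fin (m+2)) := Fin.ext (by simp)
    have h11 : (⟨1, by omega⟩ : Fin (m+2)) = (1 : Fin (m+2)) := Fin.ext (by simp)
    obtain ⟨a0, b0, xs, hstrict⟩ := hF2
    rw [h00] at hstrict
    obtain ⟨U, hUlin, hU1, hU0, hUrep⟩ :=
      genHM (prodMixture M (m+2)) hcomp htrans hF3 hF4 hstrict
    set u0 : X → ℝ := fun a => U (fun _ => a) with hu0
    have hu0lin : M.linear u0 := by
      intro a b l hl
      exact hUlin (fun _ => a) (fun _ => b) l hl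
    set x0 : X := a0 with hx0
    set C : ℝ := U (fun _ => x0) with hCdef
    set e : Fin (m+2) → X → (Fin (m+2) → X) :=
      fun i a => Function.update (fun _ => x0) i a with he
    have half_mem : (1/2 : ℝ) ∈ Set.Icc (0:ℝ) 1 := by norm_num
    set par : (Fin (m+2) → X) → ℕ → (Fin (m+2) → X) :=
      fun x k t => if (t:ℕ) < k then x t else x0 with hpar
    have hstep : ∀ (x : Fin (m+2) → X) (k : Fin (m+2)),
        U (par x ((k:ℕ)+1)) + C = U (par x (k:ℕ)) + U (e k (x k)) := by
      intro x k
      have hEqStream : (prodMixture M (m+2)).mix (par x ((k:ℕ)+1)) (1/2) (fun _ => x0) =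
          (prodMixture M (m+2)).mix (par x (k:ℕ)) (1/2) (e k (x k)) := by
        funext t
        show M.mix (par x ((k:ℕ)+1) t) (1/2) x0 = M.mix (par x (k:ℕ) t) (1/2) (e k (x k) t)
        rcases lt_trichotomy (t:ℕ) (k:ℕ) with h | h | h
        · have h1 : par x ((k:ℕ)+1) t = x t := if_pos (by omega)
          have h2 : par x (k:ℕ) t = x t := if_pos h
          have h3 : e k (x k) t = x0 :=
            Function.update_of_ne (Fin.ne_of_val_ne (Nat.ne_of_lt h)) _ _
          rw [h1, h2, h3]
        · have htk : t = k := Fin.ext h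
          subst htk
          have h1 : par x ((t:ℕ)+1) t = x t := if_pos (by omega)
          have h2 : par x (t:ℕ) t = x0 := if_neg (by omega)
          have h3 : e t (x t) t = x t := Function.update_self _ _ _
          rw [h1, h2, h3, M.mix_comm x0 (x t) (1/2) half_mem]
          norm_num
        · have h1 : par x ((k:ℕ)+1) t = x0 := if_neg (by omega)
          have h2 : par x (k:ℕ) t = x0 := if_neg (by omega)
          have h3 : e k (x k) t = x0 :=
            Function.update_of_ne (Fin.ne_of_val_ne (Nat.ne_of_lt h).symm) _ _
          rw [h1, h2, h3]
      have hL := hUlin (par x ((k:ℕ)+1)) (fun _ => x0) (1/2) half_mem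
      have hR := hUlin (par x (k:ℕ)) (e k (x k)) (1/2) half_mem
      rw [hEqStream] at hL
      rw [hR] at hL
      rw [hCdef]
      linarith
    have hdec0 : ∀ (x : Fin (m+2) → X) (k : ℕ), k ≤ m+2 →
        U (par x k) = C + ∑ t ∈ Finset.univ.filter (fun t : Fin (m+2) => (t:ℕ) < k),
          (U (e t (x t)) - C) := by
      intro x k
      induction k with
      | zero =>
        intro _
        have hp : par x 0 = fun _ => x0 := funext fun t => if_neg (by omega)
        have hfil : Finset.univ.filter (fun t : Fin (m+2) => (t:ℕ) < 0) = ∅ := by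
          apply Finset.filter_false_of_mem
          intro t _
          omega
        rw [hp, hfil, Finset.sum_empty, add_zero, hCdef]
      | succ k ih =>
        intro hk
        set kf : Fin (m+2) := ⟨k, by omega⟩ with hkf
        have hs := hstep x kf
        have hfil : Finset.univ.filter (fun t : Fin (m+2) => (t:ℕ) < k+1) =
            insert kf (Finset.univ.filter (fun t : Fin (m+2) => (t:ℕ) < k)) := by
          ext t
          simp only [Finset.mem_filter, Finset.mem_insert, Finset.mem_univ, true_and, hkf,
            Fin.ext_iff]
          omega
        have hnotmem : kf ∉ Finset.univ.filter (fun t : Fin (m+2) => (t:ℕ) < k) := by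
          simp [hkf]
        rw [hfil, Finset.sum_insert hnotmem]
        have hih := ih (by omega)
        have hkv : (kf:ℕ) = k := rfl
        rw [hkv] at hs
        linarith
    have hdec : ∀ x : Fin (m+2) → X, U x = C + ∑ t : Fin (m+2), (U (e t (x t)) - C) := by
      intro x
      have h1 := hdec0 x (m+2) (le_refl _)
      have h2 : par x (m+2) = x := funext fun t => if_pos t.isLt
      have h3 : Finset.univ.filter (fun t : Fin (m+2) => (t:ℕ) < m+2) = Finset.univ :=
        Finset.filter_true_of_mem (fun t _ => t.isLt)
      rw [h2, h3] at h1
      exact h1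
    have hφlin : ∀ i : Fin (m+2), M.linear (fun a => U (e i a) - C) := by
      intro i a b l hl
      have hEq : e i (M.mix a l b) = (prodMixture M (m+2)).mix (e i a) l (e i b) := by
        funext t
        show Function.update (fun _ => x0) i (M.mix a l b) t = M.mix (e i a t) l (e i b t)
        by_cases h : t = i
        · subst h
          simp only [he, Function.update_self]
        · simp only [he, Function.update_of_ne h]
          exact (mix_self M x0 hl).symm
      show U (e i (M.mix a l b)) - C = l * (U (e i a) - C) + (1-l) * (U (e i b) - C)
      rw [hEq, hUlin (e i a) (e i b) l hl]
      ring
    have hφmono : ∀ i : Fin (m+2), ∀ a b : X, u0 a ≥ u0 b → U (e i a) ≥ U (e i b) := by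
      intro i a b h
      apply (hUrep _ _).mp
      apply hF5
      intro t
      by_cases ht : t = i
      · subst ht
        simp only [he, Function.update_self]
        exact (hUrep _ _).mpr h
      · simp only [he, Function.update_of_ne ht]
        exact rel_refl hcomp _
    have hu0ab : u0 b0 < u0 a0 := by
      by_contra hcon
      push_neg at hcon
      apply hstrict.2
      apply hF5
      intro t
      by_cases ht : t = (0 : Fin (m+2))
      · subst ht
        simp only [Function.update_self]
        exact (hUrep _ _).mpr hcon
      · simp only [Function.update_of_ne ht]
        exact rel_refl hcomp _
    have hΔpos : (0:ℝ) < u0 a0 - u0 b0 := by linarith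
    have hcone := fun i : Fin (m+2) =>
      cone_lemma M hu0lin (hφlin i) (fun a b h => by
        show U (e i a) - C ≥ U (e i b) - C
        have := hφmono i a b h
        linarith) hu0ab
    choose w hw0 hw using hcone
    have hUdiff : ∀ x y : Fin (m+2) → X,
        U x - U y = ∑ t : Fin (m+2), w t * (u0 (x t) - u0 (y t)) := by
      intro x y
      rw [hdec x, hdec y]
      have hd : ∑ t : Fin (m+2), ((U (e t (x t)) - C) - (U (e t (y t)) - C)) =
          (∑ t : Fin (m+2), (U (e t (x t)) - C)) - ∑ t : Fin (m+2), (U (e t (y t)) - C) :=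
        Finset.sum_sub_distrib _ _
      have hcongr : ∑ t : Fin (m+2), ((U (e t (x t)) - C) - (U (e t (y t)) - C)) =
          ∑ t : Fin (m+2), w t * (u0 (x t) - u0 (y t)) :=
        Finset.sum_congr rfl fun t _ => hw t (x t) (y t)
      linear_combination hcongr - hd
    have hwrep : ∀ x y : Fin (m+2) → X, R x y ↔
        (∑ t : Fin (m+2), w t * u0 (x t)) ≥ ∑ t : Fin (m+2), w t * u0 (y t) := by
      intro x y
      rw [hUrep x y]
      have h2 : (∑ t : Fin (m+2), w t * u0 (x t)) - (∑ t : Fin (m+2), w t * u0 (y t)) =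
          U x - U y := by
        rw [hUdiff x y, ← Finset.sum_sub_distrib]
        apply Finset.sum_congr rfl
        intro t _
        ring
      constructor <;> intro h <;> [linarith [h2]; linarith [h2]]
    have hw0pos : 0 < w 0 := by
      have hUe : U (Function.update xs 0 a0) - U (Function.update xs 0 b0) =
          w 0 * (u0 a0 - u0 b0) := by
        rw [hUdiff]
        rw [Finset.sum_eq_single (0 : Fin (m+2))]
        · rw [Function.update_self, Function.update_self]
        · intro t _ ht
          rw [Function.update_of_ne ht, Function.update_of_ne ht]
          simp
        · intro h
          exact absurd (Finset.mem_univ _) h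
      have h2 : ¬ (U (Function.update xs 0 b0) ≥ U (Function.update xs 0 a0)) :=
        fun h => hstrict.2 ((hUrep _ _).mpr h)
      have h3 : U (Function.update xs 0 b0) < U (Function.update xs 0 a0) := not_le.mp h2
      nlinarith
    have hshiftiff : ∀ x y : Fin (m+2) → X,
        ((∑ t : Fin (m+1), w t.succ * u0 (x t.succ)) ≥
          ∑ t : Fin (m+1), w t.succ * u0 (y t.succ)) ↔
        ((∑ t : Fin (m+1), w t.castSucc * u0 (x t.succ)) ≥
          ∑ t : Fin (m+1), w t.castSucc * u0 (y t.succ)) := by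
      intro x y
      have h := hF7 x0 x y
      rw [h00] at h
      rw [hwrep, hwrep, peel_update w u0 x x0, peel_update w u0 y x0,
        peel_shiftApp w u0 x x0, peel_shiftApp w u0 y x0] at h
      rw [add_left_ge_iff, add_right_ge_iff] at h
      exact h
    have hKEY : ∀ i : Fin (m+1), ∀ α β : ℝ, α ∈ Set.Icc (0:ℝ) 1 → β ∈ Set.Icc (0:ℝ) 1 →
        (w (Fin.succ 0) * α ≥ w i.succ * β ↔
          w (Fin.castSucc 0) * α ≥ w i.castSucc * β) := by
      intro i α β hα hβ
      have h := hshiftiff (Fin.cons b0 (Function.update (fun _ => b0) 0 (M.mix a0 α b0)))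
        (Fin.cons b0 (Function.update (fun _ => b0) i (M.mix a0 β b0)))
      simp only [Fin.cons_succ] at h
      rw [sum_update (fun t : Fin (m+1) => w t.succ) u0 (fun _ => b0) 0 (M.mix a0 α b0),
        sum_update (fun t : Fin (m+1) => w t.succ) u0 (fun _ => b0) i (M.mix a0 β b0),
        sum_update (fun t : Fin (m+1) => w t.castSucc) u0 (fun _ => b0) 0 (M.mix a0 α b0),
        sum_update (fun t : Fin (m+1) => w t.castSucc) u0 (fun _ => b0) i (M.mix a0 β b0)] at h
      have hmixα : u0 (M.mix a0 α b0) - u0 b0 = α * (u0 a0 - u0 b0) := by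
        rw [hu0lin a0 b0 α hα]
        ring
      have hmixβ : u0 (M.mix a0 β b0) - u0 b0 = β * (u0 a0 - u0 b0) := by
        rw [hu0lin a0 b0 β hβ]
        ring
      rw [hmixα, hmixβ, ← mul_assoc, ← mul_assoc, ← mul_assoc, ← mul_assoc] at h
      rw [shift_scale_iff hΔpos, shift_scale_iff hΔpos] at h
      exact h
    have hc00 : Fin.castSucc (0 : Fin (m+1)) = (0 : Fin (m+2)) := Fin.ext (by simp)
    have hs01 : Fin.succ (0 : Fin (m+1)) = (1 : Fin (m+2)) := Fin.ext (by simp)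
    have hw0' : 0 < w (Fin.castSucc (0 : Fin (m+1))) := by
      rw [hc00]
      exact hw0pos
    have hw1pos : 0 < w (Fin.succ (0 : Fin (m+1))) := by
      by_contra hcon
      push_neg at hcon
      have h := hKEY 0 0 1 ⟨le_refl 0, zero_le_one⟩ ⟨zero_le_one, le_refl 1⟩
      have hl : w (Fin.succ (0 : Fin (m+1))) * 0 ≥ w (Fin.succ (0 : Fin (m+1))) * 1 := by
        rw [mul_zero, mul_one]
        linarith
      have h2 := h.mp hl
      rw [mul_zero, mul_one] at h2
      linarith
    have hconstSP : strictP R (fun _ => a0) (fun _ => b0) := by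
      constructor
      · apply (hwrep _ _).mpr
        apply Finset.sum_le_sum
        intro t _
        exact mul_le_mul_of_nonneg_left (by linarith) (hw0 t)
      · intro h
        have h1 := (hwrep _ _).mp h
        have h2 : (∑ t : Fin (m+2), w t * u0 b0) = (∑ t : Fin (m+2), w t) * u0 b0 :=
          (Finset.sum_mul _ _ _).symm
        have h3 : (∑ t : Fin (m+2), w t * u0 a0) = (∑ t : Fin (m+2), w t) * u0 a0 :=
          (Finset.sum_mul _ _ _).symm
        have h4 : w 0 ≤ ∑ t : Fin (m+2), w t :=
          Finset.single_le_sum (fun t _ => hw0 t) (Finset.mem_univ 0)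
        rw [h2, h3] at h1
        nlinarith
    have hw1lt : w (1 : Fin (m+2)) < w (0 : Fin (m+2)) := by
      have h6 := hF6 a0 b0 hconstSP (fun _ => x0)
      rw [h00, h11] at h6
      have hne : (1 : Fin (m+2)) ≠ (0 : Fin (m+2)) := by simp [Fin.ext_iff]
      have key : ∀ c d : X, ∑ t : Fin (m+2), w t *
          u0 (Function.update (Function.update (fun _ => x0) (0 : Fin (m+2)) c)
            (1 : Fin (m+2)) d t) =
          (∑ t : Fin (m+2), w t * u0 x0) + w 0 * (u0 c - u0 x0) + w 1 * (u0 d - u0 x0) := by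
        intro c d
        rw [sum_update w u0 _ 1 d, sum_update w u0 _ 0 c, Function.update_of_ne hne]
      have h7 : ¬ (∑ t : Fin (m+2), w t *
          u0 (Function.update (Function.update (fun _ => x0) (0 : Fin (m+2)) b0)
            (1 : Fin (m+2)) a0 t) ≥ ∑ t : Fin (m+2), w t *
          u0 (Function.update (Function.update (fun _ => x0) (0 : Fin (m+2)) a0)
            (1 : Fin (m+2)) b0 t)) := fun hh => h6.2 ((hwrep _ _).mpr hh)
      rw [key, key] at h7
      have h8 := not_le.mp h7
      nlinarith
    have hrec' : ∀ i : Fin (m+1), w i.succ * w 0 = w i.castSucc * w 1 := by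
      intro i
      have h := ratio_eq hw1pos hw0' (hw0 i.succ) (hw0 i.castSucc) (hKEY i)
      rw [hc00, hs01] at h
      exact h
    have hw1pos' : 0 < w (1 : Fin (m+2)) := by
      have h := hw1pos
      rw [hs01] at h
      exact h
    refine ⟨u0, w (1 : Fin (m+2)) / w (0 : Fin (m+2)), hu0lin,
      ⟨a0, b0, ne_of_gt hu0ab⟩, ?_, ?_⟩
    · constructor
      · exact div_pos hw1pos' hw0pos
      · rw [div_lt_one hw0pos]
        exact hw1lt
    · intro x y
      set δ : ℝ := w (1 : Fin (m+2)) / w (0 : Fin (m+2)) with hδdef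
      have hclosed : ∀ t : Fin (m+2), w t = w 0 * δ^(t:ℕ) := by
        intro t
        induction t using Fin.induction with
        | zero => simp
        | succ i ih =>
          have hr := hrec' i
          have hiδ : w i.succ = δ * w i.castSucc := by
            rw [hδdef, div_mul_eq_mul_div, eq_div_iff (ne_of_gt hw0pos)]
            linear_combination hr
          rw [hiδ, ih, Fin.coe_castSucc, Fin.val_succ, pow_succ]
          ring
      rw [hwrep x y]
      have efac : ∀ x : Fin (m+2) → X,
          (∑ t : Fin (m+2), w t * u0 (x t)) =
            w 0 * ∑ t : Fin (m+2), δ^(t:ℕ) * u0 (x t) := by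
        intro x
        rw [Finset.mul_sum]
        apply Finset.sum_congr rfl
        intro t _
        rw [hclosed t]
        ring
      rw [efac x, efac y]
      constructor
      · intro h
        exact le_of_mul_le_mul_left (by linarith) hw0pos
      · intro h
        have := mul_le_mul_of_nonneg_left h (le_of_lt hw0pos)
        linarith

  · rintro ⟨u, δ, hulin, ⟨pa, pb, hab⟩, hδ, hrep⟩
    obtain ⟨m, rfl⟩ : ∃ m, n = m + 2 := ⟨n - 2, by omega⟩
    have h00 : (⟨0, by omega⟩ : Fin (m+2)) = (0 : Fin (m+2)) := Fin.ext (by simp)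
    obtain ⟨p, q, hpq⟩ : ∃ p q : X, u q < u p := by
      rcases lt_or_gt_of_ne hab with h | h
      · exact ⟨pb, pa, h⟩
      · exact ⟨pa, pb, h⟩
    have hGpos : (0:ℝ) < ∑ t : Fin (m+2), δ^(t:ℕ) :=
      Finset.sum_pos (fun t _ => pow_pos hδ.1 _) ⟨0, Finset.mem_univ 0⟩
    have hconst : ∀ a b : X, R (fun _ => a) (fun _ => b) ↔ u b ≤ u a := by
      intro a b
      rw [hrep]
      have e : ∀ c : X, ∑ t : Fin (m+2), δ^(t:ℕ) * u c = (∑ t : Fin (m+2), δ^(t:ℕ)) * u c :=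
        fun c => (Finset.sum_mul _ _ _).symm
      rw [ge_iff_le, e, e]
      constructor
      · intro h; exact le_of_mul_le_mul_left (by linarith [h]) hGpos
      · intro h; nlinarith
    have hconstS : ∀ a b : X, strictP R (fun _ => a) (fun _ => b) ↔ u b < u a := by
      intro a b
      unfold strictP
      rw [hconst, hconst]
      exact lt_iff_le_not_ge.symm
    have hSmix : ∀ (x z : Fin (m+2) → X) (l : ℝ), l ∈ Set.Icc (0:ℝ) 1 →
        ∑ t : Fin (m+2), δ^(t:ℕ) * u (mixStream M x l z t) =
          l * ∑ t : Fin (m+2), δ^(t:ℕ) * u (x t) +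
            (1-l) * ∑ t : Fin (m+2), δ^(t:ℕ) * u (z t) := by
      intro x z l hl
      rw [Finset.mul_sum, Finset.mul_sum, ← Finset.sum_add_distrib]
      apply Finset.sum_congr rfl
      intro t _
      show δ^(t:ℕ) * u (M.mix (x t) l (z t)) = _
      rw [hulin (x t) (z t) l hl]
      ring
    refine ⟨⟨?_, ?_⟩, ?_, ?_, ?_, ?_, ?_, ?_⟩
    · -- completeness
      intro x y
      rcases le_total (∑ t : Fin (m+2), δ^(t:ℕ) * u (y t))
        (∑ t : Fin (m+2), δ^(t:ℕ) * u (x t)) with h | h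
      · exact Or.inl ((hrep x y).mpr h)
      · exact Or.inr ((hrep y x).mpr h)
    · -- transitivity
      intro x y z h1 h2
      rw [hrep] at h1 h2 ⊢
      exact ge_trans h1 h2
    · -- F2'
      refine ⟨p, q, fun _ => p, ?_⟩
      rw [h00]
      have key : ∀ c : X, ∑ t : Fin (m+2), δ^(t:ℕ) *
          u (Function.update (fun _ => p) (0 : Fin (m+2)) c t) =
          (∑ t : Fin (m+2), δ^(t:ℕ) * u p) + δ^(((0 : Fin (m+2))):ℕ) * (u c - u p) := fun c =>
        sum_update (fun t => δ^(t:ℕ)) u (fun _ => p) 0 c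
      have hv0 : (((0 : Fin (m+2))):ℕ) = 0 := by simp
      constructor
      · rw [hrep, key, key, hv0, pow_zero]
        linarith
      · rw [hrep, key, key, hv0, pow_zero]
        intro h
        nlinarith
    · -- F3
      intro x y z l hl
      rw [hrep, hrep, hSmix x z l ⟨le_of_lt hl.1, le_of_lt hl.2⟩,
        hSmix y z l ⟨le_of_lt hl.1, le_of_lt hl.2⟩]
      constructor
      · intro h
        nlinarith [hl.1, hl.2]
      · intro h
        nlinarith [hl.1, hl.2]
    · -- F4
      intro x y z
      constructor
      · have e : {l : ℝ | l ∈ Set.Icc (0:ℝ) 1 ∧ R (mixStream M x l z) y} =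
            {l : ℝ | l ∈ Set.Icc (0:ℝ) 1} ∩
            {l : ℝ | (∑ t : Fin (m+2), δ^(t:ℕ) * u (y t)) ≤
              l * (∑ t : Fin (m+2), δ^(t:ℕ) * u (x t)) +
              (1-l) * (∑ t : Fin (m+2), δ^(t:ℕ) * u (z t))} := by
          ext l
          simp only [Set.mem_setOf_eq, Set.mem_inter_iff]
          exact and_congr_right fun hl => by rw [hrep, hSmix x z l hl]
        rw [e]
        exact isClosed_Icc.inter (isClosed_le continuous_const (by fun_prop))
      · have e : {l : ℝ | l ∈ Set.Icc (0:ℝ) 1 ∧ R y (mixStream M x l z)} =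
            {l : ℝ | l ∈ Set.Icc (0:ℝ) 1} ∩
            {l : ℝ | l * (∑ t : Fin (m+2), δ^(t:ℕ) * u (x t)) +
              (1-l) * (∑ t : Fin (m+2), δ^(t:ℕ) * u (z t)) ≤
              (∑ t : Fin (m+2), δ^(t:ℕ) * u (y t))} := by
          ext l
          simp only [Set.mem_setOf_eq, Set.mem_inter_iff]
          exact and_congr_right fun hl => by rw [hrep, hSmix x z l hl]
        rw [e]
        exact isClosed_Icc.inter (isClosed_le (by fun_prop) continuous_const)
    · -- F5
      intro x y h
      rw [hrep]
      apply Finset.sum_le_sum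
      intro t _
      exact mul_le_mul_of_nonneg_left ((hconst (x t) (y t)).mp (h t))
        (pow_nonneg (le_of_lt hδ.1) _)
    · -- F6
      intro a b hab' x
      have hba : u b < u a := (hconstS a b).mp hab'
      rw [h00]
      have h11 : (⟨1, by omega⟩ : Fin (m+2)) = (1 : Fin (m+2)) := Fin.ext (by simp)
      rw [h11]
      have hne : (1 : Fin (m+2)) ≠ (0 : Fin (m+2)) := by
        simp [Fin.ext_iff]
      have key : ∀ c d : X, ∑ t : Fin (m+2), δ^(t:ℕ) *
          u (Function.update (Function.update x (0 : Fin (m+2)) c) (1 : Fin (m+2)) d t) =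
          (∑ t : Fin (m+2), δ^(t:ℕ) * u (x t)) + δ^(((0:Fin (m+2))):ℕ) * (u c - u (x 0)) +
            δ^(((1:Fin (m+2))):ℕ) * (u d - u (x 1)) := by
        intro c d
        rw [sum_update (fun t => δ^(t:ℕ)) u _ 1 d, sum_update (fun t => δ^(t:ℕ)) u x 0 c,
          Function.update_of_ne hne]
      have hd01 : (((0:Fin (m+2))):ℕ) = 0 := by simp
      have hd11 : (((1:Fin (m+2))):ℕ) = 1 := by simp
      constructor
      · rw [hrep, key, key, hd01, hd11, pow_zero, pow_one]
        nlinarith [hδ.1, hδ.2]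
      · rw [hrep, key, key, hd01, hd11, pow_zero, pow_one]
        intro h
        nlinarith [hδ.1, hδ.2]
    · -- F7
      intro a x y
      rw [h00, hrep, hrep]
      rw [peel_update (fun t => δ^(t:ℕ)) u x a, peel_update (fun t => δ^(t:ℕ)) u y a,
        peel_shiftApp (fun t => δ^(t:ℕ)) u x a, peel_shiftApp (fun t => δ^(t:ℕ)) u y a]
      have hfac : ∀ x : Fin (m+2) → X,
          ∑ t : Fin (m+1), δ^(((t.succ : Fin (m+2))):ℕ) * u (x t.succ) =
            δ * ∑ t : Fin (m+1), δ^(((t.castSucc : Fin (m+2))):ℕ) * u (x t.succ) := by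
        intro x
        rw [Finset.mul_sum]
        apply Finset.sum_congr rfl
        intro t _
        rw [Fin.val_succ, Fin.coe_castSucc, pow_succ]
        ring
      rw [hfac x, hfac y]
      constructor
      · intro h
        have h2 : δ * ∑ t : Fin (m+1), δ^(((t.castSucc : Fin (m+2))):ℕ) * u (y t.succ) ≤
            δ * ∑ t : Fin (m+1), δ^(((t.castSucc : Fin (m+2))):ℕ) * u (x t.succ) := by linarith
        have h3 := le_of_mul_le_mul_left h2 hδ.1
        linarith
      · intro h
        have h3 : ∑ t : Fin (m+1), δ^(((t.castSucc : Fin (m+2))):ℕ) * u (y t.succ) ≤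
            ∑ t : Fin (m+1), δ^(((t.castSucc : Fin (m+2))):ℕ) * u (x t.succ) := by linarith
        nlinarith [hδ.1]
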